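/- arXiv:1703.05085 — 2 statements merged into one kernel-verified Lean document; each statement's English description precedes it below -/
import Mathlib

section
/- For every integer T ≥ 1 there exist measures μ₀^T ∈ M₊(X⁰) and ν^T ∈ M₊(X) such that the restriction of the Lebesgue measure to X^T solves the discrete Liouville equation λ_{X^T} + ν^T = f_#ν^T + μ₀^T, and moreover the masses satisfy μ₀^T(ℝ^n) = Σ_{t=0}^{T} vol Y^t = vol X^T and ν^T(ℝ^n) = Σ_{t=0}^{T} t · vol Y^t. -/
open MeasureTheory ProbabilityTheory
open scoped ENNReal

private lemma mvpoly_differentiable {n : ℕ} (p : MvPolynomial (Fin n) ℝ) :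
    Differentiable ℝ (fun x : Fin n → ℝ => MvPolynomial.eval x p) := by
  induction p using MvPolynomial.induction_on with
  | C a => simpa using differentiable_const (a : ℝ)
  | add p q hp hq => simpa [MvPolynomial.eval_add] using hp.fun_add hq
  | mul_X p i hp =>
      have hx : Differentiable ℝ (fun x : Fin n → ℝ => x i) :=
        (ContinuousLinearMap.proj (R := ℝ) (φ := fun _ : Fin n => ℝ) i).differentiable
      simpa [MvPolynomial.eval_mul] using hp.fun_mul hx

/-- Lifting a (finite) restriction of Lebesgue measure on a subset of `φ '' K` through the
differentiable map `φ`, to a measure concentrated on the compact set `K`. -/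
private lemma exists_lift {n : ℕ} (φ : (Fin n → ℝ) → (Fin n → ℝ)) (hφ : Differentiable ℝ φ)
    (K : Set (Fin n → ℝ)) (hK : IsCompact K) (Yt : Set (Fin n → ℝ)) (hYm : MeasurableSet Yt)
    (hYsub : Yt ⊆ φ '' K) (hYfin : volume Yt ≠ ∞) :
    ∃ μ : Measure (Fin n → ℝ), IsFiniteMeasure μ ∧ μ Kᶜ = 0 ∧
      μ.map φ = volume.restrict Yt ∧ μ Set.univ = volume Yt := by
  classical
  have hφm : Measurable φ := hφ.continuous.measurable
  have hKm : MeasurableSet K := hK.isClosed.measurableSet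
  set m : Measure (Fin n → ℝ) := volume.restrict Yt with hm
  haveI hmfin : IsFiniteMeasure m := ⟨by
    rw [hm, Measure.restrict_apply_univ]; exact lt_top_iff_ne_top.2 hYfin⟩
  set θ : Measure (Fin n → ℝ) := volume.restrict K with hθ
  haveI hθfin : IsFiniteMeasure θ := ⟨by
    rw [hθ, Measure.restrict_apply_univ]; exact hK.measure_lt_top⟩
  have hpairm : Measurable (fun x : Fin n → ℝ => (φ x, x)) := hφm.prodMk measurable_id
  set ρ : Measure ((Fin n → ℝ) × (Fin n → ℝ)) := θ.map (fun x => (φ x, x)) with hρ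
  haveI hρfin : IsFiniteMeasure ρ := ⟨by
    rw [hρ, Measure.map_apply hpairm MeasurableSet.univ]
    simpa using hθfin.measure_univ_lt_top⟩
  have hfst : ρ.fst = θ.map φ := by
    rw [hρ]; exact Measure.fst_map_prodMk measurable_id
  have habs : m ≪ ρ.fst := by
    refine Measure.AbsolutelyContinuous.mk fun s hs h0 => ?_
    rw [hfst, Measure.map_apply hφm hs, hθ, Measure.restrict_apply (hφm hs)] at h0
    have h2 : volume (φ '' (φ ⁻¹' s ∩ K)) = 0 :=
      addHaar_image_eq_zero_of_differentiableOn_of_addHaar_eq_zero volume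
        hφ.differentiableOn h0
    rw [hm, Measure.restrict_apply hs]
    refine measure_mono_null ?_ h2
    rintro y ⟨hys, hyY⟩
    obtain ⟨x, hxK, hxy⟩ := hYsub hyY
    exact ⟨x, ⟨by rw [Set.mem_preimage, hxy]; exact hys, hxK⟩, hxy⟩
  set κ := ρ.condKernel with hκ
  haveI : IsMarkovKernel κ := by rw [hκ]; infer_instance
  have hdis : ρ.fst ⊗ₘ κ = ρ := ρ.disintegrate κ
  set S : Set ((Fin n → ℝ) × (Fin n → ℝ)) := {p | φ p.2 = p.1 ∧ p.2 ∈ K} with hS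
  have hSm : MeasurableSet S := by
    have h1 : MeasurableSet {p : (Fin n → ℝ) × (Fin n → ℝ) | φ p.2 = p.1} :=
      measurableSet_eq_fun (hφm.comp measurable_snd) measurable_fst
    exact h1.inter (measurable_snd hKm)
  have hρS : ρ Sᶜ = 0 := by
    rw [hρ, Measure.map_apply hpairm hSm.compl]
    have hsub : (fun x => (φ x, x)) ⁻¹' Sᶜ ⊆ Kᶜ := by
      intro x hx hxK
      exact hx ⟨rfl, hxK⟩
    refine measure_mono_null hsub ?_
    rw [hθ, Measure.restrict_apply hKm.compl]
    simp
  have hae : ∀ᵐ y ∂ρ.fst, κ y (Prod.mk y ⁻¹' Sᶜ) = 0 := by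
    have h0 : (ρ.fst ⊗ₘ κ) Sᶜ = 0 := by rw [hdis]; exact hρS
    rw [Measure.compProd_apply hSm.compl] at h0
    exact (lintegral_eq_zero_iff
      (Kernel.measurable_kernel_prodMk_left hSm.compl)).mp h0
  have haem : ∀ᵐ y ∂m, κ y (Prod.mk y ⁻¹' Sᶜ) = 0 := habs.ae_le hae
  have happly : ∀ s : Set (Fin n → ℝ), MeasurableSet s →
      (m.bind κ) s = ∫⁻ y, κ y s ∂m :=
    fun s hs => Measure.bind_apply hs κ.measurable.aemeasurable
  have hmassu : (m.bind κ) Set.univ = volume Yt := by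
    rw [happly _ MeasurableSet.univ]
    simp [measure_univ, hm, Measure.restrict_apply_univ]
  refine ⟨m.bind κ, ⟨by rw [hmassu]; exact lt_top_iff_ne_top.2 hYfin⟩, ?_, ?_, hmassu⟩
  · rw [happly _ hKm.compl]
    rw [lintegral_eq_zero_iff (Kernel.measurable_coe κ hKm.compl)]
    filter_upwards [haem] with y hy
    refine measure_mono_null ?_ hy
    intro x hx
    simp only [hS, Set.mem_preimage, Set.mem_compl_iff, Set.mem_setOf_eq] at hx ⊢
    intro h; exact hx h.2
  · refine Measure.ext fun B hB => ?_
    rw [Measure.map_apply hφm hB, happly _ (hφm hB)]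
    have hind : ∀ᵐ y ∂m, κ y (φ ⁻¹' B) = B.indicator 1 y := by
      filter_upwards [haem] with y hy
      have hfiber : ∀ A : Set (Fin n → ℝ),
          κ y A = κ y (A ∩ {x | φ x = y ∧ x ∈ K}) := by
        intro A
        refine le_antisymm ?_ (measure_mono Set.inter_subset_left)
        calc κ y A ≤ κ y (A ∩ {x | φ x = y ∧ x ∈ K}) +
              κ y (A \ {x | φ x = y ∧ x ∈ K}) := measure_le_inter_add_diff _ _ _
          _ ≤ κ y (A ∩ {x | φ x = y ∧ x ∈ K}) + κ y (Prod.mk y ⁻¹' Sᶜ) := by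
              gcongr
              intro x hx
              simp only [hS, Set.mem_preimage, Set.mem_compl_iff, Set.mem_setOf_eq]
              exact hx.2
          _ = κ y (A ∩ {x | φ x = y ∧ x ∈ K}) := by rw [hy, add_zero]
      by_cases hyB : y ∈ B
      · have h1 : φ ⁻¹' B ∩ {x | φ x = y ∧ x ∈ K} = {x | φ x = y ∧ x ∈ K} := by
          refine Set.inter_eq_self_of_subset_right ?_
          intro x hx
          have hxy : φ x = y := hx.1
          simp only [Set.mem_preimage, hxy]
          exact hyB
        have h2 : κ y Set.univ = κ y {x | φ x = y ∧ x ∈ K} := by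
          rw [hfiber Set.univ, Set.univ_inter]
        rw [hfiber, h1, ← h2, measure_univ]
        simp [Set.indicator_of_mem hyB]
      · have h1 : φ ⁻¹' B ∩ {x | φ x = y ∧ x ∈ K} = ∅ := by
          ext x
          simp only [Set.mem_inter_iff, Set.mem_preimage, Set.mem_setOf_eq,
            Set.mem_empty_iff_false, iff_false, not_and]
          rintro hxB h1 -
          exact hyB (h1 ▸ hxB)
        rw [hfiber, h1, measure_empty]
        simp [Set.indicator_of_notMem hyB]
    rw [lintegral_congr_ae hind, lintegral_indicator_one hB]

/-- For every `T ≥ 1` there exist `μ₀^T ∈ M₊(X⁰)` and `ν^T ∈ M₊(X)` such that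
`λ_{X^T} + ν^T = f_# ν^T + μ₀^T`, with masses
`μ₀^T(ℝ^n) = ∑_{t=0}^{T} vol Y^t = vol X^T` and `ν^T(ℝ^n) = ∑_{t=0}^{T} t · vol Y^t`. -/
theorem liouville_finite_horizon (n : ℕ) (hn : 1 ≤ n)
    (f : (Fin n → ℝ) → (Fin n → ℝ))
    (hfpoly : ∀ i, ∃ p : MvPolynomial (Fin n) ℝ, ∀ x, f x i = MvPolynomial.eval x p)
    (X0 X : Set (Fin n → ℝ)) (hX0 : IsCompact X0) (hX : IsCompact X)
    (hreach : (⋃ t : ℕ, f^[t] '' X0) ⊆ X)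
    (XT : ℕ → Set (Fin n → ℝ))
    (hXT : ∀ T : ℕ, XT T = ⋃ t ∈ Finset.range (T + 1), f^[t] '' X0)
    (Y : ℕ → Set (Fin n → ℝ))
    (hY0 : Y 0 = X0)
    (hYt : ∀ t : ℕ, 1 ≤ t → Y t = f^[t] '' X0 \ XT (t - 1)) :
    ∀ T : ℕ, 1 ≤ T →
      ∃ μ0T νT : Measure (Fin n → ℝ),
        IsFiniteMeasure μ0T ∧ IsFiniteMeasure νT ∧
        μ0T X0ᶜ = 0 ∧ νT Xᶜ = 0 ∧
        volume.restrict (XT T) + νT = Measure.map f νT + μ0T ∧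
        μ0T Set.univ = ∑ t ∈ Finset.range (T + 1), volume (Y t) ∧
        μ0T Set.univ = volume (XT T) ∧
        νT Set.univ = ∑ t ∈ Finset.range (T + 1), (t : ℝ≥0∞) * volume (Y t) := by
  classical
  have hfd : Differentiable ℝ f := by
    rw [differentiable_pi]
    intro i
    obtain ⟨p, hp⟩ := hfpoly i
    have hfi : (fun x => f x i) = fun x => MvPolynomial.eval x p := funext hp
    rw [hfi]
    exact mvpoly_differentiable p
  have hfm : Measurable f := hfd.continuous.measurable
  have hitd : ∀ t : ℕ, Differentiable ℝ f^[t] := fun t => hfd.iterate t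
  have hitm : ∀ t : ℕ, Measurable f^[t] := fun t => hfm.iterate t
  have hKt : ∀ t : ℕ, IsCompact (f^[t] '' X0) := fun t => hX0.image (hitd t).continuous
  have hX0m : MeasurableSet X0 := hX0.isClosed.measurableSet
  have hXTm : ∀ T : ℕ, MeasurableSet (XT T) := by
    intro T
    rw [hXT T]
    exact (Finset.range (T + 1)).measurableSet_biUnion
      fun t _ => (hKt t).isClosed.measurableSet
  have hYm : ∀ t : ℕ, MeasurableSet (Y t) := by
    intro t
    cases t with
    | zero => rw [hY0]; exact hX0m
    | succ t =>
        rw [hYt (t + 1) (Nat.le_add_left 1 t)]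
        simpa using ((hKt (t + 1)).isClosed.measurableSet.diff (hXTm t))
  have hYsub : ∀ t : ℕ, Y t ⊆ f^[t] '' X0 := by
    intro t
    cases t with
    | zero => rw [hY0]; simp
    | succ t => rw [hYt (t + 1) (Nat.le_add_left 1 t)]; exact Set.diff_subset
  have hYfin : ∀ t : ℕ, volume (Y t) ≠ ∞ :=
    fun t => ((measure_mono (hYsub t)).trans_lt (hKt t).measure_lt_top).ne
  -- decomposition of the restricted Lebesgue measure
  have hdec : ∀ T : ℕ,
      volume.restrict (XT T) = ∑ t ∈ Finset.range (T + 1), volume.restrict (Y t) := by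
    intro T
    induction T with
    | zero =>
        have h0 : XT 0 = Y 0 := by rw [hXT 0, hY0]; simp
        rw [h0]; simp
    | succ T ih =>
        have hstep : XT (T + 1) = XT T ∪ Y (T + 1) := by
          rw [hXT (T + 1), hYt (T + 1) (Nat.le_add_left 1 T)]
          simp only [Nat.add_sub_cancel]
          rw [Finset.range_add_one, Finset.set_biUnion_insert, Set.union_comm,
            Set.union_diff_self, ← hXT T, Set.union_comm]
        rw [hstep, Measure.restrict_union ?hdisj ((hYm (T + 1))),
          Finset.sum_range_succ, ih]
        case hdisj =>
          rw [hYt (T + 1) (Nat.le_add_left 1 T)]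
          simpa using Set.disjoint_sdiff_right
  -- per-time lifted measures
  choose μ hμfin hμK hμmap hμmass using fun t : ℕ =>
    exists_lift f^[t] (hitd t) X0 hX0 (Y t) (hYm t) (hYsub t) (hYfin t)
  haveI : ∀ t, IsFiniteMeasure (μ t) := hμfin
  intro T hT
  refine ⟨∑ t ∈ Finset.range (T + 1), μ t,
    ∑ t ∈ Finset.range (T + 1), ∑ k ∈ Finset.range t, (μ t).map f^[k],
    ?_, ?_, ?_, ?_, ?_, ?_, ?_, ?_⟩
  · refine ⟨?_⟩
    rw [Measure.finset_sum_apply]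
    exact ENNReal.sum_lt_top.2 fun t _ => (hμfin t).measure_univ_lt_top
  · refine ⟨?_⟩
    rw [Measure.finset_sum_apply]
    refine ENNReal.sum_lt_top.2 fun t _ => ?_
    rw [Measure.finset_sum_apply]
    refine ENNReal.sum_lt_top.2 fun k _ => ?_
    rw [Measure.map_apply (hitm k) MeasurableSet.univ, Set.preimage_univ]
    exact (hμfin t).measure_univ_lt_top
  · rw [Measure.finset_sum_apply]
    exact Finset.sum_eq_zero fun t _ => hμK t
  · rw [Measure.finset_sum_apply]
    refine Finset.sum_eq_zero fun t _ => ?_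
    rw [Measure.finset_sum_apply]
    refine Finset.sum_eq_zero fun k _ => ?_
    rw [Measure.map_apply (hitm k) hX.isClosed.measurableSet.compl]
    refine measure_mono_null ?_ (hμK t)
    intro x hx
    simp only [Set.mem_preimage, Set.mem_compl_iff] at hx ⊢
    intro hxX0
    exact hx (hreach (Set.mem_iUnion.2 ⟨k, Set.mem_image_of_mem _ hxX0⟩))
  · -- the Liouville equation
    refine Measure.ext fun s hs => ?_
    have hres : ∀ t : ℕ, volume.restrict (Y t) s = μ t (f^[t] ⁻¹' s) := by
      intro t
      rw [← hμmap t, Measure.map_apply (hitm t) hs]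
    simp only [Measure.add_apply, Measure.finset_sum_apply,
      Measure.map_apply hfm hs, Measure.finset_sum_apply]
    rw [hdec T, Measure.finset_sum_apply]
    have hmapk : ∀ t k : ℕ, ((μ t).map f^[k]) s = μ t (f^[k] ⁻¹' s) :=
      fun t k => Measure.map_apply (hitm k) hs
    have hmapk' : ∀ t k : ℕ, ((μ t).map f^[k]) (f ⁻¹' s) = μ t (f^[k + 1] ⁻¹' s) := by
      intro t k
      rw [Measure.map_apply (hitm k) (hfm hs), Function.iterate_succ' f k,
        Set.preimage_comp]
    calc (∑ t ∈ Finset.range (T + 1), volume.restrict (Y t) s) +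
          ∑ t ∈ Finset.range (T + 1), ∑ k ∈ Finset.range t, ((μ t).map f^[k]) s
        = ∑ t ∈ Finset.range (T + 1),
            ∑ k ∈ Finset.range (t + 1), μ t (f^[k] ⁻¹' s) := by
          rw [← Finset.sum_add_distrib]
          refine Finset.sum_congr rfl fun t _ => ?_
          rw [Finset.sum_range_succ, hres t, add_comm]
          congr 1
          exact Finset.sum_congr rfl fun k _ => hmapk t k
      _ = (∑ t ∈ Finset.range (T + 1), ∑ k ∈ Finset.range t, ((μ t).map f^[k]) (f ⁻¹' s)) +
            ∑ t ∈ Finset.range (T + 1), μ t s := by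
          rw [← Finset.sum_add_distrib]
          refine Finset.sum_congr rfl fun t _ => ?_
          rw [Finset.sum_range_succ']
          simp only [hmapk']
          congr 1
  · rw [Measure.finset_sum_apply]
    exact Finset.sum_congr rfl fun t _ => hμmass t
  · rw [Measure.finset_sum_apply]
    have := congrArg (fun ν : Measure (Fin n → ℝ) => ν Set.univ) (hdec T)
    simp only [Measure.restrict_apply_univ, Measure.finset_sum_apply] at this
    rw [this]
    exact Finset.sum_congr rfl fun t _ => hμmass t
  · rw [Measure.finset_sum_apply]
    refine Finset.sum_congr rfl fun t _ => ?_
    rw [Measure.finset_sum_apply]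
    have hterm : ∀ k ∈ Finset.range t, ((μ t).map f^[k]) Set.univ = volume (Y t) := by
      intro k _
      rw [Measure.map_apply (hitm k) MeasurableSet.univ, Set.preimage_univ, hμmass t]
    rw [Finset.sum_congr rfl hterm, Finset.sum_const, Finset.card_range, nsmul_eq_mul]
end

section
/- Assume Σ_{t=0}^{∞} t · vol Y^t < ∞ and vol X^∞ = vol cl(X^∞). Then there exists T₀ ∈ ℕ such that for all integers T ≥ T₀: the primal LP admits an optimal solution whose second component is μ* = λ_{X^∞}, every optimal solution has this same second component μ* = λ_{X^∞}, and the optimal value satisfies p^T = vol X^∞. -/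
open MeasureTheory
open scoped ENNReal

/-- Feasibility for the primal LP. -/
def PrimalFeasible (n : ℕ) (f : (Fin n → ℝ) → (Fin n → ℝ))
    (X0 X : Set (Fin n → ℝ)) (T : ℕ)
    (μ₀ μ μh ν : Measure (Fin n → ℝ)) (a : ℝ≥0∞) : Prop :=
  IsFiniteMeasure μ₀ ∧ IsFiniteMeasure μ ∧ IsFiniteMeasure μh ∧ IsFiniteMeasure ν ∧
  μ₀ X0ᶜ = 0 ∧ μ Xᶜ = 0 ∧ μh Xᶜ = 0 ∧ ν Xᶜ = 0 ∧
  ν Set.univ + a = (T : ℝ≥0∞) * volume X ∧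
  μ + ν = Measure.map f ν + μ₀ ∧
  μ + μh = volume.restrict X

/-- Optimal value of the primal LP. -/
noncomputable def primalValue (n : ℕ) (f : (Fin n → ℝ) → (Fin n → ℝ))
    (X0 X : Set (Fin n → ℝ)) (T : ℕ) : ℝ≥0∞ :=
  sSup {m : ℝ≥0∞ | ∃ μ₀ μ μh ν a, PrimalFeasible n f X0 X T μ₀ μ μh ν a ∧
    m = μ Set.univ}

open Set

/-! ### Auxiliary lemmas -/

lemma PUO.ennreal_eq_of_le_of_add_eq {a b c d : ℝ≥0∞} (hac : a ≤ c) (hbd : b ≤ d)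
    (h : a + b = c + d) (hd : d ≠ ⊤) : a = c := by
  have h1 : a + d = c + d := le_antisymm
    (add_le_add hac le_rfl) (by rw [← h]; exact add_le_add le_rfl hbd)
  exact WithTop.add_right_cancel hd h1

lemma PUO.measure_map_sum {α β : Type*} [MeasurableSpace α] [MeasurableSpace β]
    {g : α → β} (hg : Measurable g) (μs : ℕ → Measure α) :
    Measure.map g (Measure.sum μs) = Measure.sum (fun i => Measure.map g (μs i)) := by
  ext s hs
  rw [Measure.map_apply hg hs, Measure.sum_apply _ hs, Measure.sum_apply _ (hg hs)]
  exact tsum_congr fun i => (Measure.map_apply hg hs).symm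

lemma PUO.measure_map_finset_sum {α β : Type*} [MeasurableSpace α] [MeasurableSpace β]
    {g : α → β} (hg : Measurable g) (I : Finset ℕ) (μs : ℕ → Measure α) :
    Measure.map g (∑ i ∈ I, μs i) = ∑ i ∈ I, Measure.map g (μs i) := by
  classical
  induction I using Finset.induction with
  | empty => simp
  | insert _ _ h ih => rw [Finset.sum_insert h, Finset.sum_insert h, Measure.map_add _ _ hg, ih]

lemma PUO.restrict_eq_self_of_compl_null {α : Type*} [MeasurableSpace α] {μ : Measure α}
    {U : Set α} (hU : MeasurableSet U) (h : μ Uᶜ = 0) : μ.restrict U = μ := by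
  ext s hs
  rw [Measure.restrict_apply hs]
  have h1 : μ s = μ (s ∩ U) + μ (s \ U) := (measure_inter_add_diff s hU).symm
  have h2 : μ (s \ U) = 0 := measure_mono_null (diff_subset_compl s U) h
  rw [h1, h2, add_zero]

lemma PUO.contDiff_mvpoly {n : ℕ} (p : MvPolynomial (Fin n) ℝ) :
    ContDiff ℝ 2 (fun x : Fin n → ℝ => MvPolynomial.eval x p) := by
  induction p using MvPolynomial.induction_on with
  | C a => simpa using contDiff_const (c := a)
  | add p q hp hq => simp only [MvPolynomial.eval_add]; exact hp.add hq
  | mul_X p i hp =>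
      simp only [MvPolynomial.eval_mul, MvPolynomial.eval_X]
      exact hp.mul ((ContinuousLinearMap.proj i : (Fin n → ℝ) →L[ℝ] ℝ).contDiff)

lemma PUO.contDiff_of_poly {n : ℕ} (f : (Fin n → ℝ) → (Fin n → ℝ))
    (hfpoly : ∀ i, ∃ p : MvPolynomial (Fin n) ℝ, ∀ x, f x i = MvPolynomial.eval x p) :
    ContDiff ℝ 2 f := by
  rw [contDiff_pi]
  intro i
  obtain ⟨p, hp⟩ := hfpoly i
  have : (fun x => f x i) = fun x => MvPolynomial.eval x p := funext hp
  rw [this]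
  exact PUO.contDiff_mvpoly p

lemma PUO.contDiff_iterate {n : ℕ} {f : (Fin n → ℝ) → (Fin n → ℝ)} (hf : ContDiff ℝ 2 f) :
    ∀ t : ℕ, ContDiff ℝ 2 f^[t] := by
  intro t
  induction t with
  | zero => simpa using contDiff_id
  | succ t ih => rw [Function.iterate_succ]; exact ih.comp hf

/-- Pullback of an absolutely continuous measure supported on the image of a compact set
under a C² map. -/
lemma PUO.exists_pullback_measure {n : ℕ} (F : (Fin n → ℝ) → (Fin n → ℝ))
    (hF : ContDiff ℝ 2 F)
    (C : Set (Fin n → ℝ)) (hC : IsCompact C)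
    (m : Measure (Fin n → ℝ)) (hac : m ≪ volume)
    (hsupp : m ((F '' C)ᶜ) = 0) :
    ∃ σ : Measure (Fin n → ℝ), Measure.map F σ = m ∧ σ Cᶜ = 0 ∧
      σ Set.univ = m Set.univ := by
  have hFc : Continuous F := hF.continuous
  have hFm : Measurable F := hFc.measurable
  set N : Set (Fin n → ℝ) := (fun x => (fderiv ℝ F x).det) ⁻¹' {0} with hN_def
  have hNcont : Continuous (fun x => (fderiv ℝ F x).det) :=
    ContinuousLinearMap.continuous_det.comp (hF.continuous_fderiv (by norm_num))
  have hNclosed : IsClosed N := isClosed_singleton.preimage hNcont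
  have hNmeas : MeasurableSet N := hNclosed.measurableSet
  have hFN : volume (F '' N) = 0 := by
    have hderiv : ∀ x ∈ N, HasFDerivWithinAt F (fderiv ℝ F x) N x :=
      fun x _ => ((hF.differentiable (by norm_num)) x).hasFDerivAt.hasFDerivWithinAt
    have hb := MeasureTheory.addHaar_image_le_lintegral_abs_det_fderiv volume hNmeas hderiv
    have hz : ∫⁻ x in N, ENNReal.ofReal |(fderiv ℝ F x).det| ∂volume = 0 := by
      rw [← lintegral_zero (μ := volume.restrict N)]
      refine setLIntegral_congr_fun hNmeas ?_
      intro x hx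
      have : (fderiv ℝ F x).det = 0 := hx
      simp [this]
    exact le_antisymm (hz ▸ hb) zero_le
  obtain ⟨B, hBcount, hBempty, hBbasis⟩ :=
    TopologicalSpace.exists_countable_basis (Fin n → ℝ)
  obtain ⟨g, hg⟩ := (hBcount.insert ∅).exists_eq_range (insert_nonempty _ _)
  have hgopen : ∀ i, IsOpen (g i) := by
    intro i
    have : g i ∈ insert ∅ B := hg ▸ mem_range_self i
    rcases this with h | h
    · rw [h]; exact isOpen_empty
    · exact hBbasis.isOpen h
  classical
  set h : ℕ → Set (Fin n → ℝ) := fun i => if InjOn F (g i) then g i else ∅ with hh_def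
  have hhopen : ∀ i, IsOpen (h i) := by
    intro i
    by_cases hi : InjOn F (g i)
    · simp only [hh_def, hi, if_true]; exact hgopen i
    · simp only [hh_def, hi, if_false]; exact isOpen_empty
  have hhinj : ∀ i, InjOn F (h i) := by
    intro i
    by_cases hi : InjOn F (g i)
    · simpa only [hh_def, hi, if_true] using hi
    · simp only [hh_def, hi, if_false]
      exact fun x hx => absurd hx (notMem_empty x)
  have hcover : Nᶜ ⊆ ⋃ i, h i := by
    intro x hx
    have hdet : (fderiv ℝ F x).det ≠ 0 := hx
    have hdet' : LinearMap.det (fderiv ℝ F x).toLinearMap ≠ 0 := hdet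
    set e := ((fderiv ℝ F x).toLinearMap.equivOfDetNeZero hdet').toContinuousLinearEquiv
      with he
    have hcoe : (e : (Fin n → ℝ) →L[ℝ] (Fin n → ℝ)) = fderiv ℝ F x := by
      apply ContinuousLinearMap.coe_injective
      ext v
      simp [he]
    have hstrict : HasStrictFDerivAt F (e : (Fin n → ℝ) →L[ℝ] (Fin n → ℝ)) x := by
      rw [hcoe]
      exact (hF.contDiffAt).hasStrictFDerivAt (by norm_num)
    set P := hstrict.toOpenPartialHomeomorph F with hP
    have hx_src : x ∈ P.source := hstrict.mem_toOpenPartialHomeomorph_source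
    have hP_open : IsOpen P.source := P.open_source
    have hP_inj : InjOn F P.source := by
      have := P.injOn
      rwa [hstrict.toOpenPartialHomeomorph_coe] at this
    obtain ⟨v, hvB, hxv, hvsub⟩ := hBbasis.exists_subset_of_mem_open hx_src hP_open
    obtain ⟨i, hi⟩ : ∃ i, g i = v := by
      have : v ∈ insert ∅ B := mem_insert_of_mem _ hvB
      rw [hg] at this
      obtain ⟨i, hi⟩ := this
      exact ⟨i, hi⟩
    refine mem_iUnion.2 ⟨i, ?_⟩
    have hinj : InjOn F (g i) := by rw [hi]; exact hP_inj.mono hvsub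
    rw [hh_def]
    simp only [hinj, if_true]
    rw [hi]; exact hxv
  set A : ℕ → Set (Fin n → ℝ) := disjointed h with hA_def
  have hAmeas : ∀ i, MeasurableSet (A i) :=
    MeasurableSet.disjointed (fun i => (hhopen i).measurableSet)
  have hAsub : ∀ i, A i ⊆ h i := disjointed_subset h
  have hAunion : ⋃ i, A i = ⋃ i, h i := iUnion_disjointed
  set s : ℕ → Set (Fin n → ℝ) := fun i => (A i ∩ C) \ N with hs_def
  have hsmeas : ∀ i, MeasurableSet (s i) :=
    fun i => ((hAmeas i).inter hC.isClosed.measurableSet).diff hNmeas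
  have hsinj : ∀ i, InjOn F (s i) :=
    fun i => (hhinj i).mono (fun x hx => hAsub i hx.1.1)
  have hsC : ∀ i, s i ⊆ C := fun i x hx => hx.1.2
  have hemb : ∀ i, MeasurableEmbedding ((s i).restrict F) :=
    fun i => ContinuousOn.measurableEmbedding (hsmeas i) hFc.continuousOn (hsinj i)
  have hrange : ∀ i, range ((s i).restrict F) = F '' s i := fun i => range_restrict F (s i)
  have hImeas : ∀ i, MeasurableSet (F '' s i) := by
    intro i
    have := (hemb i).measurableSet_range
    rwa [hrange i] at this
  set D : ℕ → Set (Fin n → ℝ) := disjointed (fun i => F '' s i) with hD_def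
  have hDmeas : ∀ i, MeasurableSet (D i) := MeasurableSet.disjointed hImeas
  have hDdisj : Pairwise (Function.onFun Disjoint D) := disjoint_disjointed _
  have hDsub : ∀ i, D i ⊆ F '' s i := disjointed_subset _
  have hDunion : ⋃ i, D i = ⋃ i, F '' s i := iUnion_disjointed
  have hm_null : m ((⋃ i, D i)ᶜ) = 0 := by
    rw [hDunion]
    have hsub : (⋃ i, F '' s i)ᶜ ⊆ (F '' C)ᶜ ∪ F '' (C ∩ N) := by
      intro y hy
      by_cases hyC : y ∈ F '' C
      · obtain ⟨c, hcC, rfl⟩ := hyC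
        by_cases hcN : c ∈ N
        · exact Or.inr (mem_image_of_mem F ⟨hcC, hcN⟩)
        · exfalso
          have : c ∈ ⋃ i, h i := hcover hcN
          rw [← hAunion] at this
          obtain ⟨i, hi⟩ := mem_iUnion.1 this
          exact hy (mem_iUnion.2 ⟨i, mem_image_of_mem F ⟨⟨hi, hcC⟩, hcN⟩⟩)
      · exact Or.inl hyC
    refine measure_mono_null hsub (measure_union_null hsupp ?_)
    exact hac (measure_mono_null (image_mono (f := F) inter_subset_right) hFN)
  set σi : ℕ → Measure (Fin n → ℝ) := fun i =>
    Measure.map (Subtype.val) (Measure.comap ((s i).restrict F) (m.restrict (D i)))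
    with hσi_def
  refine ⟨Measure.sum σi, ?_, ?_, ?_⟩
  · have hmapi : ∀ i, Measure.map F (σi i) = m.restrict (D i) := by
      intro i
      rw [hσi_def]
      rw [Measure.map_map hFm measurable_subtype_coe]
      have hFval : F ∘ (Subtype.val : s i → (Fin n → ℝ)) = (s i).restrict F := rfl
      rw [hFval, (hemb i).map_comap, hrange i,
        Measure.restrict_restrict (hImeas i)]
      congr 1
      exact inter_eq_self_of_subset_right (hDsub i)
    have : Measure.map F (Measure.sum σi) = Measure.sum (fun i => m.restrict (D i)) := by
      rw [show Measure.map F (Measure.sum σi)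
            = Measure.sum (fun i => Measure.map F (σi i)) from ?_]
      · exact congrArg Measure.sum (funext hmapi)
      · ext u hu
        rw [Measure.map_apply hFm hu, Measure.sum_apply _ hu, Measure.sum_apply _ (hFm hu)]
        exact tsum_congr fun i => (Measure.map_apply hFm hu).symm
    rw [this, ← Measure.restrict_iUnion hDdisj hDmeas]
    exact PUO.restrict_eq_self_of_compl_null (MeasurableSet.iUnion hDmeas) hm_null
  · rw [Measure.sum_apply _ hC.isClosed.measurableSet.compl]
    have hzero : ∀ i, σi i Cᶜ = 0 := by
      intro i
      rw [hσi_def]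
      rw [Measure.map_apply measurable_subtype_coe hC.isClosed.measurableSet.compl]
      have : (Subtype.val ⁻¹' Cᶜ : Set (s i)) = ∅ := by
        ext x
        simp only [mem_preimage, mem_compl_iff, mem_empty_iff_false, iff_false, not_not]
        exact hsC i x.2
      rw [this]
      exact measure_empty
    simp only [hzero, tsum_zero]
  · rw [Measure.sum_apply _ MeasurableSet.univ]
    have hmass : ∀ i, σi i Set.univ = m (D i) := by
      intro i
      rw [hσi_def, Measure.map_apply measurable_subtype_coe MeasurableSet.univ,
        preimage_univ, (hemb i).comap_apply, image_univ, hrange i,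
        Measure.restrict_apply (hImeas i)]
      exact congrArg m (inter_eq_self_of_subset_right (hDsub i))
    rw [tsum_congr hmass, ← measure_iUnion hDdisj hDmeas]
    have := measure_add_measure_compl (μ := m) (MeasurableSet.iUnion hDmeas)
    rw [hm_null, add_zero] at this
    exact this

section Bound
variable {n : ℕ} {f : (Fin n → ℝ) → (Fin n → ℝ)} {X0 X : Set (Fin n → ℝ)} {T : ℕ}
  {μ₀ μ μh ν : Measure (Fin n → ℝ)} {a : ℝ≥0∞}

lemma PUO.feasible_null_outside (hf : Continuous f)
    (hfeas : PrimalFeasible n f X0 X T μ₀ μ μh ν a) :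
    μ (closure (⋃ t : ℕ, f^[t] '' X0))ᶜ = 0 := by
  obtain ⟨hμ₀fin, hμfin, hμhfin, hνfin, hμ₀X0, hμX, hμhX, hνX, hmass, hliou, hlam⟩ := hfeas
  set K := closure (⋃ t : ℕ, f^[t] '' X0) with hK
  have hKmeas : MeasurableSet K := isClosed_closure.measurableSet
  have hinv : f ⁻¹' Kᶜ ⊆ Kᶜ := by
    intro x hx
    intro hxK
    apply hx
    have h1 : f '' K ⊆ K := by
      calc f '' K ⊆ closure (f '' ⋃ t : ℕ, f^[t] '' X0) :=
            image_closure_subset_closure_image hf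
        _ ⊆ K := by
            apply closure_mono
            rw [image_iUnion]
            apply iUnion_subset
            intro t
            rw [← image_comp, ← Function.iterate_succ']
            exact subset_iUnion (fun t : ℕ => f^[t] '' X0) (t + 1)
    exact h1 (mem_image_of_mem f hxK)
  have heq : μ Kᶜ + ν Kᶜ = ν (f ⁻¹' Kᶜ) + μ₀ Kᶜ := by
    have := congrArg (fun ρ : Measure (Fin n → ℝ) => ρ Kᶜ) hliou
    simpa [Measure.add_apply, Measure.map_apply hf.measurable hKmeas.compl] using this
  have hμ₀K : μ₀ Kᶜ = 0 := by
    refine measure_mono_null ?_ hμ₀X0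
    apply compl_subset_compl.2
    refine subset_trans ?_ subset_closure
    simpa using subset_iUnion (fun t : ℕ => f^[t] '' X0) 0
  have hle : μ Kᶜ + ν Kᶜ ≤ 0 + ν Kᶜ := by
    rw [heq, hμ₀K, add_zero, zero_add]
    exact measure_mono hinv
  have hν_ne : ν Kᶜ ≠ ⊤ := measure_ne_top ν _
  have := ENNReal.le_of_add_le_add_right hν_ne hle
  exact le_antisymm this zero_le

lemma PUO.feasible_le_restrict (hfeas : PrimalFeasible n f X0 X T μ₀ μ μh ν a) :
    μ ≤ volume.restrict X := by
  obtain ⟨_, _, _, _, _, _, _, _, _, _, hlam⟩ := hfeas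
  calc μ ≤ μ + μh := Measure.le_add_right le_rfl
    _ = volume.restrict X := hlam

lemma PUO.feasible_mass_le (hf : Continuous f)
    (hfeas : PrimalFeasible n f X0 X T μ₀ μ μh ν a) :
    μ Set.univ ≤ volume (closure (⋃ t : ℕ, f^[t] '' X0)) := by
  set K := closure (⋃ t : ℕ, f^[t] '' X0) with hK
  have hKmeas : MeasurableSet K := isClosed_closure.measurableSet
  have hnull := PUO.feasible_null_outside hf hfeas
  have h1 : μ Set.univ = μ K := by
    have := measure_add_measure_compl (μ := μ) hKmeas
    rw [hnull, add_zero] at this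
    exact this.symm
  have h2 : μ K ≤ (volume.restrict X) K := PUO.feasible_le_restrict hfeas K
  have h3 : (volume.restrict X) K = volume (K ∩ X) := Measure.restrict_apply hKmeas
  rw [h1]
  calc μ K ≤ volume (K ∩ X) := h3 ▸ h2
    _ ≤ volume K := measure_mono inter_subset_left

lemma PUO.measure_eq_restrict_of_extreme {μ : Measure (Fin n → ℝ)}
    {Xinf : Set (Fin n → ℝ)}
    (hXinfm : MeasurableSet Xinf)
    (hsubX : closure Xinf ⊆ X) (hfin : volume X ≠ ⊤)
    (hle : μ ≤ volume.restrict X)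
    (hnull : μ (closure Xinf)ᶜ = 0)
    (hclos : volume Xinf = volume (closure Xinf))
    (hmass : μ Set.univ = volume Xinf) :
    μ = volume.restrict Xinf := by
  set K := closure Xinf with hKdef
  have hKmeas : MeasurableSet K := isClosed_closure.measurableSet
  have hKfin : volume K ≠ ⊤ :=
    ne_top_of_le_ne_top hfin (measure_mono hsubX)
  have hKX : volume (K \ Xinf) = 0 := by
    have h := measure_diff (subset_closure : Xinf ⊆ K) hXinfm.nullMeasurableSet
      (ne_top_of_le_ne_top hKfin (measure_mono subset_closure))
    rw [h, ← hclos, tsub_self]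
  have hkey : ∀ A : Set (Fin n → ℝ), MeasurableSet A → A ⊆ K → μ A = volume A := by
    intro A hAm hAK
    have h1 : μ A ≤ volume A := by
      have := hle A
      rw [Measure.restrict_apply hAm] at this
      calc μ A ≤ volume (A ∩ X) := this
        _ = volume A := by rw [inter_eq_self_of_subset_left (hAK.trans hsubX)]
    have h2 : μ (K \ A) ≤ volume (K \ A) := by
      have := hle (K \ A)
      rw [Measure.restrict_apply (hKmeas.diff hAm)] at this
      calc μ (K \ A) ≤ volume ((K \ A) ∩ X) := this
        _ = volume (K \ A) := by
            rw [inter_eq_self_of_subset_left ((diff_subset).trans hsubX)]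
    have hsum : μ A + μ (K \ A) = volume A + volume (K \ A) := by
      have hμK : μ A + μ (K \ A) = μ K := by
        have h := measure_inter_add_diff (μ := μ) K hAm
        rwa [inter_eq_self_of_subset_right hAK] at h
      have hvK : volume A + volume (K \ A) = volume K := by
        have := measure_inter_add_diff K hAm (μ := volume)
        rwa [inter_eq_self_of_subset_right hAK] at this
      have hμuniv : μ K = volume K := by
        have h := measure_add_measure_compl (μ := μ) hKmeas
        rw [hnull, add_zero] at h
        rw [h, hmass, hclos]
      rw [hμK, hvK, hμuniv]
    exact PUO.ennreal_eq_of_le_of_add_eq h1 h2 hsum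
      (ne_top_of_le_ne_top hKfin (measure_mono diff_subset))
  ext s hs
  rw [Measure.restrict_apply hs]
  have hμs : μ s = μ (s ∩ K) := by
    have h1 : μ s = μ (s ∩ K) + μ (s \ K) := (measure_inter_add_diff s hKmeas).symm
    have h2 : μ (s \ K) = 0 := measure_mono_null (diff_subset_compl s K) hnull
    rw [h1, h2, add_zero]
  have hvs : volume (s ∩ Xinf) = volume (s ∩ K) := by
    apply le_antisymm (measure_mono (inter_subset_inter_right s subset_closure))
    calc volume (s ∩ K) ≤ volume ((s ∩ Xinf) ∪ (K \ Xinf)) := by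
          apply measure_mono
          intro x hx
          by_cases hxi : x ∈ Xinf
          · exact Or.inl ⟨hx.1, hxi⟩
          · exact Or.inr ⟨hx.2, hxi⟩
      _ ≤ volume (s ∩ Xinf) + volume (K \ Xinf) := measure_union_le _ _
      _ = volume (s ∩ Xinf) := by rw [hKX, add_zero]
  rw [hμs, hvs]
  exact hkey (s ∩ K) (hs.inter hKmeas) inter_subset_right

end Bound

/-- If `∑_{t} t · vol Y^t < ∞` and `vol X^∞ = vol cl(X^∞)`, then for all large enough `T`
the primal LP has an optimal solution with `μ* = λ_{X^∞}`, every optimal solution has this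
second component, and `p^T = vol X^∞`. -/
theorem primal_unique_optimum (n : ℕ) (hn : 1 ≤ n)
    (f : (Fin n → ℝ) → (Fin n → ℝ))
    (hfpoly : ∀ i, ∃ p : MvPolynomial (Fin n) ℝ, ∀ x, f x i = MvPolynomial.eval x p)
    (X0 X : Set (Fin n → ℝ)) (hX0 : IsCompact X0) (hX : IsCompact X)
    (hreach : (⋃ t : ℕ, f^[t] '' X0) ⊆ X)
    (Y : ℕ → Set (Fin n → ℝ))
    (hY0 : Y 0 = X0)
    (hYt : ∀ t : ℕ, 1 ≤ t → Y t = f^[t] '' X0 \ ⋃ s ∈ Finset.range t, f^[s] '' X0)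
    (hsum : (∑' t : ℕ, (t : ℝ≥0∞) * volume (Y t)) < ⊤)
    (hclos : volume (⋃ t : ℕ, f^[t] '' X0) = volume (closure (⋃ t : ℕ, f^[t] '' X0))) :
    ∃ T₀ : ℕ, ∀ T : ℕ, T₀ ≤ T → 1 ≤ T →
      (∃ μ₀ μ μh ν a, PrimalFeasible n f X0 X T μ₀ μ μh ν a ∧
        μ Set.univ = primalValue n f X0 X T ∧
        μ = volume.restrict (⋃ t : ℕ, f^[t] '' X0)) ∧
      (∀ μ₀ μ μh ν a, PrimalFeasible n f X0 X T μ₀ μ μh ν a →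
        μ Set.univ = primalValue n f X0 X T →
        μ = volume.restrict (⋃ t : ℕ, f^[t] '' X0)) ∧
      primalValue n f X0 X T = volume (⋃ t : ℕ, f^[t] '' X0) := by
  classical
  set Xinf := ⋃ t : ℕ, f^[t] '' X0 with hXinf_def
  have hf2 : ContDiff ℝ 2 f := PUO.contDiff_of_poly f hfpoly
  have hfc : Continuous f := hf2.continuous
  have hfm : Measurable f := hfc.measurable
  have hitc : ∀ t : ℕ, Continuous (f^[t]) := fun t => (PUO.contDiff_iterate hf2 t).continuous
  have hitm : ∀ t : ℕ, Measurable (f^[t]) := fun t => (hitc t).measurable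
  have hcomp : ∀ t : ℕ, IsCompact (f^[t] '' X0) := fun t => hX0.image (hitc t)
  have himgmeas : ∀ t : ℕ, MeasurableSet (f^[t] '' X0) :=
    fun t => (hcomp t).isClosed.measurableSet
  have hXinfmeas : MeasurableSet Xinf := MeasurableSet.iUnion himgmeas
  have hXmeas : MeasurableSet X := hX.isClosed.measurableSet
  have hX0meas : MeasurableSet X0 := hX0.isClosed.measurableSet
  have hvolX : volume X ≠ ⊤ := hX.measure_lt_top.ne
  have hKsubX : closure Xinf ⊆ X := closure_minimal hreach hX.isClosed
  have hsubX : Xinf ⊆ X := hreach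
  -- Y facts
  have hYsub : ∀ t : ℕ, Y t ⊆ f^[t] '' X0 := by
    intro t
    rcases Nat.eq_zero_or_pos t with rfl | ht
    · rw [hY0]; simp
    · rw [hYt t ht]; exact diff_subset
  have hYX : ∀ t, Y t ⊆ X := fun t => (hYsub t).trans
    ((subset_iUnion (fun s : ℕ => f^[s] '' X0) t).trans hreach)
  have hYmeas : ∀ t, MeasurableSet (Y t) := by
    intro t
    rcases Nat.eq_zero_or_pos t with rfl | ht
    · rw [hY0]; exact hX0meas
    · rw [hYt t ht]
      exact (himgmeas t).diff (MeasurableSet.biUnion (Finset.range t).countable_toSet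
        (fun s _ => himgmeas s))
  have hYdisj : Pairwise (Function.onFun Disjoint Y) := by
    have key : ∀ i j : ℕ, i < j → Disjoint (Y i) (Y j) := by
      intro i j hij
      rw [Set.disjoint_left]
      intro x hxi hxj
      rw [hYt j (by omega)] at hxj
      exact hxj.2 (Set.mem_biUnion (Finset.mem_range.mpr hij) (hYsub i hxi))
    intro i j hij
    rcases hij.lt_or_gt with h | h
    · exact key i j h
    · exact (key j i h).symm
  have hYunion : (⋃ t : ℕ, Y t) = Xinf := by
    apply subset_antisymm
    · exact iUnion_subset fun t => (hYsub t).trans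
        (subset_iUnion (fun s : ℕ => f^[s] '' X0) t)
    · intro x hx
      have hex : ∃ t : ℕ, x ∈ f^[t] '' X0 := mem_iUnion.1 hx
      have hmem : x ∈ f^[Nat.find hex] '' X0 := Nat.find_spec hex
      have hmin : ∀ s, s < Nat.find hex → x ∉ f^[s] '' X0 :=
        fun s hs => Nat.find_min hex hs
      rcases Nat.eq_zero_or_pos (Nat.find hex) with h0 | hpos
      · refine mem_iUnion.2 ⟨0, ?_⟩
        rw [hY0]
        rw [h0] at hmem
        simpa using hmem
      · refine mem_iUnion.2 ⟨Nat.find hex, ?_⟩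
        rw [hYt _ hpos]
        refine ⟨hmem, ?_⟩
        intro hxU
        simp only [Finset.mem_range, mem_iUnion, exists_prop] at hxU
        obtain ⟨s, hs, hxs⟩ := hxU
        exact hmin s hs hxs
  have hYvol : ∀ t, volume (Y t) ≠ ⊤ := fun t =>
    ne_top_of_le_ne_top hvolX (measure_mono (hYX t))
  -- pullback measures σ
  have hσex : ∀ t : ℕ, ∃ σt : Measure (Fin n → ℝ),
      Measure.map (f^[t]) σt = volume.restrict (Y t) ∧ σt X0ᶜ = 0 ∧
      σt Set.univ = volume (Y t) := by
    intro t
    rcases Nat.eq_zero_or_pos t with rfl | ht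
    · refine ⟨volume.restrict X0, ?_, ?_, ?_⟩
      · rw [Function.iterate_zero, Measure.map_id, hY0]
      · rw [Measure.restrict_apply hX0meas.compl]
        simp
      · rw [Measure.restrict_apply_univ, hY0]
    · have hres : (volume.restrict (Y t)) ((f^[t] '' X0)ᶜ) = 0 := by
        rw [Measure.restrict_apply (himgmeas t).compl]
        have hempty : (f^[t] '' X0)ᶜ ∩ Y t = ∅ := by
          rw [eq_empty_iff_forall_notMem]
          rintro x ⟨hc, hY⟩
          exact hc (hYsub t hY)
        rw [hempty, measure_empty]
      obtain ⟨σt, h1, h2, h3⟩ := PUO.exists_pullback_measure (f^[t])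
        (PUO.contDiff_iterate hf2 t) X0 hX0 (volume.restrict (Y t))
        (Measure.absolutelyContinuous_of_le Measure.restrict_le_self) hres
      exact ⟨σt, h1, h2, by rw [h3, Measure.restrict_apply_univ]⟩
  choose σ hσmap hσX0 hσuniv using hσex
  -- the candidate measures
  set μs := volume.restrict Xinf with hμs_def
  set μh := volume.restrict (X \ Xinf) with hμh_def
  set μ0 := Measure.sum σ with hμ0_def
  set ν := Measure.sum (fun t => ∑ s ∈ Finset.range t, Measure.map (f^[s]) (σ t)) with hν_def
  have htermuniv : ∀ t s : ℕ, (Measure.map (f^[s]) (σ t)) Set.univ = volume (Y t) := by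
    intro t s
    rw [Measure.map_apply (hitm s) MeasurableSet.univ, preimage_univ, hσuniv]
  have hνuniv : ν Set.univ = ∑' t : ℕ, (t : ℝ≥0∞) * volume (Y t) := by
    rw [hν_def, Measure.sum_apply _ MeasurableSet.univ]
    refine tsum_congr fun t => ?_
    rw [Measure.finset_sum_apply]
    rw [Finset.sum_congr rfl (fun s _ => htermuniv t s), Finset.sum_const,
      Finset.card_range, nsmul_eq_mul]
  have hμ0univ : μ0 Set.univ = volume Xinf := by
    rw [hμ0_def, Measure.sum_apply _ MeasurableSet.univ, tsum_congr (fun t => hσuniv t),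
      ← measure_iUnion hYdisj hYmeas, hYunion]
  -- choice of T₀
  obtain ⟨T₀, hT₀⟩ : ∃ N : ℕ,
      (∑' t : ℕ, (t : ℝ≥0∞) * volume (Y t)) ≤ (N : ℝ≥0∞) * volume X := by
    by_cases hv : volume X = 0
    · refine ⟨0, ?_⟩
      have hz : ∀ t : ℕ, (t : ℝ≥0∞) * volume (Y t) = 0 := by
        intro t
        have : volume (Y t) = 0 := le_antisymm (hv ▸ measure_mono (hYX t)) zero_le
        rw [this, mul_zero]
      rw [tsum_congr hz, tsum_zero]
      exact zero_le
    · obtain ⟨N, hN⟩ := ENNReal.exists_nat_gt (ENNReal.div_lt_top hsum.ne hv).ne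
      refine ⟨N, ?_⟩
      calc (∑' t : ℕ, (t : ℝ≥0∞) * volume (Y t))
          = (∑' t : ℕ, (t : ℝ≥0∞) * volume (Y t)) / volume X * volume X :=
            (ENNReal.div_mul_cancel hv hvolX).symm
        _ ≤ (N : ℝ≥0∞) * volume X := mul_le_mul_left hN.le _
  refine ⟨T₀, fun T hTT hT1 => ?_⟩
  have hνle : ν Set.univ ≤ (T : ℝ≥0∞) * volume X := by
    rw [hνuniv]
    calc (∑' t : ℕ, (t : ℝ≥0∞) * volume (Y t)) ≤ (T₀ : ℝ≥0∞) * volume X := hT₀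
      _ ≤ (T : ℝ≥0∞) * volume X :=
          mul_le_mul_left (by exact_mod_cast hTT) _
  -- feasibility
  have hfeas : PrimalFeasible n f X0 X T μ0 μs μh ν
      ((T : ℝ≥0∞) * volume X - ν Set.univ) := by
    refine ⟨?_, ?_, ?_, ?_, ?_, ?_, ?_, ?_, ?_, ?_, ?_⟩
    · constructor
      rw [hμ0univ]
      exact lt_of_le_of_lt (measure_mono hsubX) hX.measure_lt_top
    · constructor
      rw [hμs_def, Measure.restrict_apply_univ]
      exact lt_of_le_of_lt (measure_mono hsubX) hX.measure_lt_top
    · constructor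
      rw [hμh_def, Measure.restrict_apply_univ]
      exact lt_of_le_of_lt (measure_mono diff_subset) hX.measure_lt_top
    · constructor
      rw [hνuniv]
      exact hsum
    · rw [hμ0_def, Measure.sum_apply _ hX0meas.compl]
      simp only [hσX0, tsum_zero]
    · rw [hμs_def, Measure.restrict_apply hXmeas.compl]
      have hempty : Xᶜ ∩ Xinf = ∅ := by
        rw [eq_empty_iff_forall_notMem]
        rintro x ⟨hc, hmem⟩
        exact hc (hsubX hmem)
      rw [hempty, measure_empty]
    · rw [hμh_def, Measure.restrict_apply hXmeas.compl]
      have hempty : Xᶜ ∩ (X \ Xinf) = ∅ := by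
        rw [eq_empty_iff_forall_notMem]
        rintro x ⟨hc, hmem⟩
        exact hc hmem.1
      rw [hempty, measure_empty]
    · rw [hν_def, Measure.sum_apply _ hXmeas.compl]
      have hz : ∀ t : ℕ, (∑ s ∈ Finset.range t, Measure.map (f^[s]) (σ t)) Xᶜ = 0 := by
        intro t
        rw [Measure.finset_sum_apply]
        refine Finset.sum_eq_zero fun s _ => ?_
        rw [Measure.map_apply (hitm s) hXmeas.compl]
        refine measure_mono_null ?_ (hσX0 t)
        intro x hx
        exact fun hx0 => hx (hreach (mem_iUnion.2 ⟨s, mem_image_of_mem (f^[s]) hx0⟩))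
      simp only [hz, tsum_zero]
    · exact add_tsub_cancel_of_le hνle
    · -- Liouville equation
      have hres_sum : μs = Measure.sum (fun t => volume.restrict (Y t)) := by
        rw [hμs_def, ← hYunion]
        exact Measure.restrict_iUnion hYdisj hYmeas
      have hmapν : Measure.map f ν
          = Measure.sum (fun t => ∑ s ∈ Finset.range t, Measure.map (f^[s+1]) (σ t)) := by
        rw [hν_def, PUO.measure_map_sum hfm]
        congr 1
        funext t
        rw [PUO.measure_map_finset_sum hfm]
        refine Finset.sum_congr rfl fun s _ => ?_
        rw [Measure.map_map hfm (hitm s), ← Function.iterate_succ']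
      rw [hres_sum, hν_def, hmapν, hμ0_def, Measure.sum_add_sum, Measure.sum_add_sum]
      congr 1
      funext t
      have hL : volume.restrict (Y t) + ∑ s ∈ Finset.range t, Measure.map (f^[s]) (σ t)
          = ∑ s ∈ Finset.range (t+1), Measure.map (f^[s]) (σ t) := by
        rw [Finset.sum_range_succ, ← hσmap t, add_comm]
      have hR : (∑ s ∈ Finset.range t, Measure.map (f^[s+1]) (σ t)) + σ t
          = ∑ s ∈ Finset.range (t+1), Measure.map (f^[s]) (σ t) := by
        rw [Finset.sum_range_succ']
        congr 1
        rw [Function.iterate_zero, Measure.map_id]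
      rw [hL, hR]
    · rw [hμs_def, hμh_def,
        ← Measure.restrict_union disjoint_sdiff_right (hXmeas.diff hXinfmeas),
        union_diff_cancel hsubX]
  -- the optimal value
  have hval : primalValue n f X0 X T = volume Xinf := by
    apply le_antisymm
    · apply sSup_le
      rintro m ⟨μ₀', μ', μh', ν', a', hfeas', rfl⟩
      calc μ' Set.univ ≤ volume (closure Xinf) := PUO.feasible_mass_le hfc hfeas'
        _ = volume Xinf := hclos.symm
    · apply le_sSup
      exact ⟨μ0, μs, μh, ν, _, hfeas, by rw [hμs_def, Measure.restrict_apply_univ]⟩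
  refine ⟨⟨μ0, μs, μh, ν, _, hfeas, ?_, hμs_def⟩, ?_, hval⟩
  · rw [hval, hμs_def, Measure.restrict_apply_univ]
  · intro μ₀' μ' μh' ν' a' hfeas' hopt
    exact PUO.measure_eq_restrict_of_extreme hXinfmeas hKsubX hvolX
      (PUO.feasible_le_restrict hfeas') (PUO.feasible_null_outside hfc hfeas')
      hclos (by rw [hopt, hval])
end
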